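/- Let C be a 4×4 real symmetric matrix with block form [[P, v],[vᵀ, N]] where P ∈ ℝ³ˣ³ is symmetric, v ∈ ℝ³, and N > 0, and let T₀ = [[R, t],[0, 1]] be a homogeneous pose matrix with RᵀR = I and det R = 1. Then for each l ∈ {1,2,3}, the l-th largest eigenvalue of the symmetric matrix A(T₀ C T₀ᵀ) equals the l-th largest eigenvalue of A(C); that is, λ_l(A(T₀ C T₀ᵀ)) = λ_l(A(C)). -/

import Mathlib

open Matrix

noncomputable section

/-- Homogeneous coordinates of a point in `ℝ³`. -/
def homog (x : Fin 3 → ℝ) : Fin 4 → ℝ := Fin.snoc x 1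

/-- The point cluster coordinate `ℜ(p) = Σₖ (pₖ,1)(pₖ,1)ᵀ` of a finite family of points. -/
def cluster {n : ℕ} (p : Fin n → Fin 3 → ℝ) : Matrix (Fin 4) (Fin 4) ℝ :=
  ∑ k, vecMulVec (homog (p k)) (homog (p k))

/-- The homogeneous pose matrix `T = [[R, t],[0, 1]]`. -/
def pose (R : Matrix (Fin 3) (Fin 3) ℝ) (t : Fin 3 → ℝ) : Matrix (Fin 4) (Fin 4) ℝ :=
  Matrix.reindex finSumFinEquiv finSumFinEquiv
    (Matrix.fromBlocks R (Matrix.of fun i (_ : Fin 1) => t i)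
      (0 : Matrix (Fin 1) (Fin 3) ℝ) (1 : Matrix (Fin 1) (Fin 1) ℝ))

/-- The upper-left `3×3` block `P` of a `4×4` matrix. -/
def Pblk (C : Matrix (Fin 4) (Fin 4) ℝ) : Matrix (Fin 3) (Fin 3) ℝ :=
  Matrix.of fun i j => C i.castSucc j.castSucc

/-- The upper-right `3×1` block `v` of a `4×4` matrix. -/
def vblk (C : Matrix (Fin 4) (Fin 4) ℝ) : Fin 3 → ℝ :=
  fun i => C i.castSucc (Fin.last 3)

/-- The `(4,4)` entry `N` of a `4×4` matrix. -/
def Nent (C : Matrix (Fin 4) (Fin 4) ℝ) : ℝ := C (Fin.last 3) (Fin.last 3)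

/-- `A(C) = (1/N) P − (1/N²) v vᵀ`. -/
def Amat (C : Matrix (Fin 4) (Fin 4) ℝ) : Matrix (Fin 3) (Fin 3) ℝ :=
  (1 / Nent C) • Pblk C - (1 / (Nent C) ^ 2) • vecMulVec (vblk C) (vblk C)

/-- The `l`-th largest eigenvalue (`l = 0` being the largest) of a real symmetric
`3×3` matrix. -/
def eigDesc {A : Matrix (Fin 3) (Fin 3) ℝ} (hA : A.IsHermitian) (l : Fin 3) : ℝ :=
  (hA.eigenvalues ∘ Tuple.sort hA.eigenvalues) l.rev

/-! ### Auxiliary lemmas: spectral side -/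

open Polynomial List in
/-- Conjugation by a pair of mutually inverse matrices preserves the characteristic
polynomial. -/
lemma charpoly_unit_conj' {n R : Type*} [Fintype n] [DecidableEq n] [CommRing R]
    (U V A : Matrix n n R) (h1 : U * V = 1) :
    (U * A * V).charpoly = A.charpoly := by
  have key : charmatrix (U * A * V) = U.map C * charmatrix A * V.map C := by
    unfold charmatrix
    rw [Matrix.mul_sub, Matrix.sub_mul]
    congr 1
    · rw [scalar_apply, ← smul_one_eq_diagonal, Matrix.mul_smul, Matrix.mul_one,
        Matrix.smul_mul, ← Matrix.map_mul, h1, Matrix.map_one _ (map_zero _) (map_one _)]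
    · simp [RingHom.mapMatrix_apply, ← Matrix.map_mul]
  have hdet : (U.map C).det * (V.map C).det = 1 := by
    rw [← det_mul, ← Matrix.map_mul, h1, Matrix.map_one _ (map_zero _) (map_one _), det_one]
  rw [Matrix.charpoly, key, det_mul, det_mul, Matrix.charpoly]
  ring_nf
  rw [mul_comm, ← mul_assoc, mul_comm ((V.map C).det), hdet, one_mul]

open Polynomial in
lemma charpoly_diagonal' {n R : Type*} [Fintype n] [DecidableEq n] [CommRing R] (d : n → R) :
    (diagonal d).charpoly = ∏ i, (X - C (d i)) := by
  have : charmatrix (diagonal d) = diagonal (fun i => X - C (d i)) := by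
    ext i j
    rcases eq_or_ne i j with h | h
    · subst h; simp [charmatrix_apply_eq]
    · simp [charmatrix_apply_ne _ _ _ h, diagonal_apply_ne _ h]
  rw [Matrix.charpoly, this, det_diagonal]

open Polynomial in
/-- The characteristic polynomial of a real hermitian matrix is the product of the
linear factors given by its eigenvalues. -/
lemma herm_charpoly {n : Type*} [Fintype n] [DecidableEq n]
    (A : Matrix n n ℝ) (hA : A.IsHermitian) :
    A.charpoly = ∏ i, (X - C (hA.eigenvalues i)) := by
  have hst := hA.spectral_theorem
  set U := (hA.eigenvectorUnitary : Matrix n n ℝ) with hU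
  have h1 : U * star U = 1 := Unitary.mul_star_self_of_mem hA.eigenvectorUnitary.2
  have : A.charpoly = (diagonal (RCLike.ofReal ∘ hA.eigenvalues) : Matrix n n ℝ).charpoly := by
    rw [congrArg Matrix.charpoly hst]
    exact charpoly_unit_conj' _ _ _ h1
  rw [this]
  have : (RCLike.ofReal ∘ hA.eigenvalues : n → ℝ) = hA.eigenvalues := by
    ext i; simp
  rw [this, charpoly_diagonal']

open Polynomial List in
/-- Two hermitian matrices with equal characteristic polynomials have the same
eigenvalues up to permutation. -/
lemma ofFn_perm_of_charpoly_eq {m : ℕ} {A B : Matrix (Fin m) (Fin m) ℝ}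
    (hA : A.IsHermitian) (hB : B.IsHermitian) (h : A.charpoly = B.charpoly) :
    List.ofFn hA.eigenvalues ~ List.ofFn hB.eigenvalues := by
  rw [herm_charpoly A hA, herm_charpoly B hB] at h
  have key : ∀ (f : Fin m → ℝ),
      (∏ i, (X - C (f i))).roots = (List.ofFn f : Multiset ℝ) := by
    intro f
    have := Polynomial.roots_multiset_prod_X_sub_C ((List.ofFn f : Multiset ℝ))
    rw [← this]
    congr 1
    rw [Finset.prod_eq_multiset_prod]
    congr 1
    simp only [List.ofFn_eq_map, ← Multiset.map_coe, Multiset.map_map, Fin.univ_def]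
    rfl
  have := congrArg Polynomial.roots h
  rw [key, key] at this
  exact Multiset.coe_eq_coe.mp this

open List in
/-- Sorting is invariant under permutation of the values of a tuple. -/
lemma sorted_eq_of_perm' {m : ℕ} (f g : Fin m → ℝ)
    (h : List.ofFn f ~ List.ofFn g) :
    f ∘ Tuple.sort f = g ∘ Tuple.sort g := by
  apply List.ofFn_injective
  refine (fun hp h1 h2 => List.Perm.eq_of_pairwise' (r := (· ≤ ·)) h1 h2 hp) ?_ ?_ ?_
  · calc List.ofFn (f ∘ Tuple.sort f) ~ List.ofFn f := (Tuple.sort f).ofFn_comp_perm f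
      _ ~ List.ofFn g := h
      _ ~ List.ofFn (g ∘ Tuple.sort g) := ((Tuple.sort g).ofFn_comp_perm g).symm
  · exact (List.pairwise_ofFn.mpr fun i j hij => Tuple.monotone_sort f hij.le)
  · exact (List.pairwise_ofFn.mpr fun i j hij => Tuple.monotone_sort g hij.le)

/-! ### Auxiliary lemmas: block decomposition side -/

section BlockLemmas

local notation "e" => finSumFinEquiv (m := 3) (n := 1)

lemma e_inl (i : Fin 3) : e (Sum.inl i) = i.castSucc := rfl
lemma e_inr : e (Sum.inr 0) = Fin.last 3 := rfl

lemma symm_castSucc (i : Fin 3) :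
    (finSumFinEquiv (m := 3) (n := 1)).symm i.castSucc = Sum.inl i := by
  rw [← e_inl, Equiv.symm_apply_apply]

lemma symm_last : (finSumFinEquiv (m := 3) (n := 1)).symm (Fin.last 3) = Sum.inr 0 := by
  rw [← e_inr, Equiv.symm_apply_apply]

lemma Pblk_reindex (M : Matrix (Fin 3 ⊕ Fin 1) (Fin 3 ⊕ Fin 1) ℝ) :
    Pblk (reindex e e M) = M.toBlocks₁₁ := by
  ext i j
  simp [Pblk, reindex_apply, submatrix_apply, symm_castSucc, toBlocks₁₁]

lemma vblk_reindex (M : Matrix (Fin 3 ⊕ Fin 1) (Fin 3 ⊕ Fin 1) ℝ) (i : Fin 3) :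
    vblk (reindex e e M) i = M (Sum.inl i) (Sum.inr 0) := by
  simp [vblk, reindex_apply, submatrix_apply, symm_castSucc, symm_last]
  exact congrArg (M (Sum.inl i)) symm_last

lemma Nent_reindex (M : Matrix (Fin 3 ⊕ Fin 1) (Fin 3 ⊕ Fin 1) ℝ) :
    Nent (reindex e e M) = M (Sum.inr 0) (Sum.inr 0) := by
  simp [Nent, reindex_apply, submatrix_apply, symm_last]
  exact congrArg₂ M symm_last symm_last

lemma Amat_reindex (M : Matrix (Fin 3 ⊕ Fin 1) (Fin 3 ⊕ Fin 1) ℝ) :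
    Amat (reindex e e M) = (1 / M (Sum.inr 0) (Sum.inr 0)) • M.toBlocks₁₁
      - (1 / (M (Sum.inr 0) (Sum.inr 0)) ^ 2) • (M.toBlocks₁₂ * (M.toBlocks₁₂)ᵀ) := by
  have hv : vecMulVec (vblk (reindex e e M)) (vblk (reindex e e M))
      = M.toBlocks₁₂ * (M.toBlocks₁₂)ᵀ := by
    ext i j
    rw [vecMulVec_apply, vblk_reindex, vblk_reindex]
    simp [mul_apply, Fin.sum_univ_one, toBlocks₁₂]
  rw [Amat, Pblk_reindex, Nent_reindex, hv]

/-- Decomposition of a symmetric `4×4` matrix into its blocks. -/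
lemma C_decomp (C : Matrix (Fin 4) (Fin 4) ℝ) (hC : C.IsSymm) :
    C = reindex e e (fromBlocks (Pblk C) (Matrix.of fun i (_ : Fin 1) => vblk C i)
      (Matrix.of fun (_ : Fin 1) j => vblk C j) (Matrix.of fun _ _ => Nent C)) := by
  have hs : ∀ i j : Fin 4, C j i = C i j := fun i j => congrFun (congrFun hC i) j
  have key : (reindex e e).symm C = fromBlocks (Pblk C) (Matrix.of fun i (_ : Fin 1) => vblk C i)
      (Matrix.of fun (_ : Fin 1) j => vblk C j) (Matrix.of fun _ _ => Nent C) := by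
    ext (i | i) (j | j)
    · rfl
    · simp [reindex_apply, submatrix_apply, fromBlocks, Pblk, vblk, Nent, e_inl, e_inr,
        Fin.fin_one_eq_zero j]
    · simp [reindex_apply, submatrix_apply, fromBlocks, Pblk, vblk, Nent, e_inl, e_inr,
        Fin.fin_one_eq_zero i]
      exact hs _ _
    · simp [reindex_apply, submatrix_apply, fromBlocks, Pblk, vblk, Nent, e_inl, e_inr,
        Fin.fin_one_eq_zero i, Fin.fin_one_eq_zero j]
  calc C = reindex e e ((reindex e e).symm C) := by simp
    _ = _ := by rw [key]

/-- The key matrix-algebra identity behind the invariance of `Amat`. -/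
lemma key_alg (P : Matrix (Fin 3) (Fin 3) ℝ) (V T : Matrix (Fin 3) (Fin 1) ℝ) (ν : ℝ)
    (R : Matrix (Fin 3) (Fin 3) ℝ) (hν : ν ≠ 0) :
    (1 / ν) • ((R * P + T * Vᵀ) * Rᵀ + (R * V + T * (ν • (1 : Matrix (Fin 1) (Fin 1) ℝ))) * Tᵀ)
      - (1 / ν ^ 2) • ((R * V + T * (ν • (1 : Matrix (Fin 1) (Fin 1) ℝ)))
          * (R * V + T * (ν • (1 : Matrix (Fin 1) (Fin 1) ℝ)))ᵀ)
      = R * ((1 / ν) • P - (1 / ν ^ 2) • (V * Vᵀ)) * Rᵀ := by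
  simp only [transpose_add, transpose_mul, transpose_smul, transpose_one,
    Matrix.mul_add, Matrix.add_mul, Matrix.smul_mul, Matrix.mul_smul, smul_smul,
    Matrix.mul_one, Matrix.one_mul, smul_add, smul_sub, Matrix.sub_mul, Matrix.mul_sub,
    Matrix.mul_assoc]
  match_scalars <;> field_simp <;> try ring

/-- `A(T C Tᵀ) = R A(C) Rᵀ`. -/
lemma Amat_conj (C : Matrix (Fin 4) (Fin 4) ℝ) (hC : C.IsSymm) (hN : Nent C ≠ 0)
    (R : Matrix (Fin 3) (Fin 3) ℝ) (t : Fin 3 → ℝ) :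
    Amat (pose R t * C * (pose R t)ᵀ) = R * Amat C * Rᵀ := by
  set ν := Nent C with hν
  set P := Pblk C with hP
  set V : Matrix (Fin 3) (Fin 1) ℝ := Matrix.of fun i _ => vblk C i with hVdef
  set T : Matrix (Fin 3) (Fin 1) ℝ := Matrix.of fun i (_ : Fin 1) => t i with hTdef
  have hmul : ∀ (A B : Matrix (Fin 3 ⊕ Fin 1) (Fin 3 ⊕ Fin 1) ℝ),
      reindex e e A * reindex e e B = reindex e e (A * B) := fun A B => by
    simp [reindex_apply, submatrix_mul_equiv]
  have hCd : C = reindex e e (fromBlocks P V Vᵀ (ν • (1 : Matrix (Fin 1) (Fin 1) ℝ))) := by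
    rw [C_decomp C hC]
    congr 1
    ext (i | i) (j | j) <;>
      simp [fromBlocks, Fin.fin_one_eq_zero, hVdef, hν, hP]
  have hpose : pose R t = reindex e e (fromBlocks R T
      (0 : Matrix (Fin 1) (Fin 3) ℝ) (1 : Matrix (Fin 1) (Fin 1) ℝ)) := rfl
  have hAC : Amat C = (1 / ν) • P - (1 / ν ^ 2) • (V * Vᵀ) := by
    rw [Amat]
    congr 1
    ext i j
    simp [vecMulVec_apply, mul_apply, Fin.sum_univ_one]
    rfl
  have step : pose R t * C * (pose R t)ᵀ
      = reindex e e (fromBlocks R T 0 1 * fromBlocks P V Vᵀ (ν • 1) *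
          (fromBlocks R T 0 1)ᵀ) := by
    rw [hpose, hCd, transpose_reindex, hmul, hmul]
  rw [step, Amat_reindex, hAC]
  simp only [fromBlocks_transpose, fromBlocks_multiply, transpose_zero, transpose_one,
    Matrix.zero_mul, Matrix.mul_zero, Matrix.one_mul, Matrix.mul_one, zero_add, add_zero,
    toBlocks_fromBlocks₁₁, toBlocks_fromBlocks₁₂, fromBlocks_apply₂₂,
    Matrix.smul_apply, Matrix.one_apply_eq, smul_eq_mul, mul_one]
  exact key_alg P V T ν R hN

end BlockLemmas

/-- **Theorem 3 (invariance of the BA cost to rigid transformation).** -/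
theorem eig_Amat_invariant (C : Matrix (Fin 4) (Fin 4) ℝ) (hC : C.IsSymm)
    (hN : 0 < Nent C)
    (R : Matrix (Fin 3) (Fin 3) ℝ) (t : Fin 3 → ℝ)
    (hR : Rᵀ * R = 1) (hdet : R.det = 1)
    (h₁ : (Amat (pose R t * C * (pose R t)ᵀ)).IsHermitian)
    (h₂ : (Amat C).IsHermitian) :
    ∀ l : Fin 3, eigDesc h₁ l = eigDesc h₂ l := by
  intro l
  have hNe : Nent C ≠ 0 := ne_of_gt hN
  have hcp : (Amat (pose R t * C * (pose R t)ᵀ)).charpoly = (Amat C).charpoly := by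
    rw [Amat_conj C hC hNe R t]
    exact charpoly_unit_conj' R Rᵀ _ (mul_eq_one_comm.mp hR)
  have hperm := ofFn_perm_of_charpoly_eq h₁ h₂ hcp
  have hsort := sorted_eq_of_perm' _ _ hperm
  unfold eigDesc
  rw [hsort]

end
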